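/- Define f(p) = ln(2 + 4^p) + (p−1)·ln(2·3^{p/(p−1)} + 1) and r(p) = f(p)/p for p ∈ (1,2]. Then r(p) ≤ lim_{p→1⁺} r(p) = ln 18 for all p ∈ (1, 1.7]. -/

import Mathlib

open Filter Topology

/-- `f(p) = ln(2 + 4^p) + (p−1)·ln(2·3^{p/(p−1)} + 1)`. -/
noncomputable def f (p : ℝ) : ℝ :=
  Real.log (2 + (4 : ℝ) ^ p)
    + (p - 1) * Real.log (2 * (3 : ℝ) ^ (p / (p - 1)) + 1)

/-- `r(p) = f(p)/p`. -/
noncomputable def r (p : ℝ) : ℝ := f p / p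

namespace RLog18Aux

open Real

lemma num1 : (6.47:ℝ) ≤ (3:ℝ) ^ (1.7:ℝ) := by
  have h0 : (0:ℝ) ≤ (3:ℝ) ^ (1.7:ℝ) := (rpow_pos_of_pos (by norm_num) _).le
  refine le_of_pow_le_pow_left₀ (n := 10) (by norm_num) h0 ?_
  have : ((3:ℝ) ^ (1.7:ℝ)) ^ (10:ℕ) = (3:ℝ) ^ (17:ℕ) := by
    rw [← rpow_natCast ((3:ℝ) ^ (1.7:ℝ)) 10, ← rpow_mul (by norm_num : (0:ℝ) ≤ 3)]
    norm_num
  rw [this]; norm_num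

lemma num2 : (4:ℝ) ^ (0.7:ℝ) ≤ 2.64 := by
  refine le_of_pow_le_pow_left₀ (n := 10) (by norm_num) (by norm_num) ?_
  have : ((4:ℝ) ^ (0.7:ℝ)) ^ (10:ℕ) = (4:ℝ) ^ (7:ℕ) := by
    rw [← rpow_natCast ((4:ℝ) ^ (0.7:ℝ)) 10, ← rpow_mul (by norm_num : (0:ℝ) ≤ 4)]
    norm_num
  rw [this]; norm_num

lemma num3 : (3:ℝ) ^ (-(10/7):ℝ) ≤ 0.209 := by
  have h1 : (1000/209:ℝ) ≤ (3:ℝ) ^ ((10/7):ℝ) := by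
    have h0 : (0:ℝ) ≤ (3:ℝ) ^ ((10/7):ℝ) := (rpow_pos_of_pos (by norm_num) _).le
    refine le_of_pow_le_pow_left₀ (n := 7) (by norm_num) h0 ?_
    have : ((3:ℝ) ^ ((10/7):ℝ)) ^ (7:ℕ) = (3:ℝ) ^ (10:ℕ) := by
      rw [← rpow_natCast ((3:ℝ) ^ ((10/7):ℝ)) 7, ← rpow_mul (by norm_num : (0:ℝ) ≤ 3)]
      norm_num
    rw [this]; norm_num
  rw [rpow_neg (by norm_num : (0:ℝ) ≤ 3)]
  calc ((3:ℝ) ^ ((10/7):ℝ))⁻¹ ≤ (1000/209:ℝ)⁻¹ := by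
        apply inv_anti₀ (by norm_num) h1
    _ = 0.209 := by norm_num

lemma holder (s : ℝ) (hs0 : 0 ≤ s) (hs7 : s ≤ 0.7) :
    1 + 2 * (4:ℝ) ^ s ≤
      (3:ℝ) ^ (1 - s/0.7 : ℝ) * (1 + 2 * (4:ℝ) ^ (0.7:ℝ)) ^ (s/0.7 : ℝ) := by
  set B : ℝ := (4:ℝ) ^ (0.7:ℝ) with hB
  have hBpos : 0 < B := rpow_pos_of_pos (by norm_num) _
  set Y : ℝ := 1 + 2 * B with hY
  have hYpos : 0 < Y := by positivity
  set w₂ : ℝ := s / 0.7 with hw2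
  set w₁ : ℝ := 1 - w₂ with hw1
  have hw₂0 : 0 ≤ w₂ := by positivity
  have hw₂1 : w₂ ≤ 1 := by rw [hw2]; rw [div_le_one (by norm_num)]; linarith
  have hw₁0 : 0 ≤ w₁ := by simp [hw1]; linarith
  have hsum : w₁ + w₂ = 1 := by ring
  have t₁ : ((1:ℝ)/3) ^ w₁ * ((1:ℝ)/Y) ^ w₂ ≤ w₁ * (1/3) + w₂ * (1/Y) :=
    Real.geom_mean_le_arith_mean2_weighted hw₁0 hw₂0 (by norm_num) (by positivity) hsum
  have t₂ : ((2:ℝ)/3) ^ w₁ * ((2*B)/Y) ^ w₂ ≤ w₁ * (2/3) + w₂ * ((2*B)/Y) :=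
    Real.geom_mean_le_arith_mean2_weighted hw₁0 hw₂0 (by norm_num) (by positivity) hsum
  have hrsum : w₁ * (1/3) + w₂ * (1/Y) + (w₁ * (2/3) + w₂ * ((2*B)/Y)) = 1 := by
    have : (1:ℝ)/Y + (2*B)/Y = 1 := by field_simp [hY]; exact hY.symm
    calc w₁ * (1/3) + w₂ * (1/Y) + (w₁ * (2/3) + w₂ * ((2*B)/Y))
        = w₁ * (1/3 + 2/3) + w₂ * (1/Y + (2*B)/Y) := by ring
      _ = w₁ + w₂ := by rw [this]; ring
      _ = 1 := hsum
  have h3pos : (0:ℝ) < 3 := by norm_num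
  have e4 : (4:ℝ) ^ s = B ^ w₂ := by
    rw [hB, ← rpow_mul (by norm_num : (0:ℝ) ≤ 4)]
    congr 1
    rw [hw2]; field_simp
  have e1 : ((1:ℝ)/3) ^ w₁ * ((1:ℝ)/Y) ^ w₂ = ((3:ℝ)^w₁)⁻¹ * (Y^w₂)⁻¹ := by
    rw [one_div, one_div, ← rpow_neg_one (3:ℝ), ← rpow_neg_one Y,
      ← rpow_mul h3pos.le, ← rpow_mul hYpos.le, neg_one_mul, neg_one_mul,
      rpow_neg h3pos.le, rpow_neg hYpos.le]
  have e2 : ((2:ℝ)/3) ^ w₁ * ((2*B)/Y) ^ w₂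
      = 2 * B ^ w₂ * (((3:ℝ)^w₁)⁻¹ * (Y^w₂)⁻¹) := by
    rw [div_rpow (by norm_num) h3pos.le, div_rpow (by positivity) hYpos.le,
      mul_rpow (by norm_num) hBpos.le]
    have h2 : (2:ℝ)^w₁ * (2:ℝ)^w₂ = 2 := by
      rw [← rpow_add (by norm_num : (0:ℝ) < 2), hsum, rpow_one]
    field_simp
    exact h2
  have hmulpos : (0:ℝ) < (3:ℝ)^w₁ * Y^w₂ := by positivity
  have key : (1 + 2 * (4:ℝ)^s) * (((3:ℝ)^w₁)⁻¹ * (Y^w₂)⁻¹) ≤ 1 := by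
    calc (1 + 2 * (4:ℝ)^s) * (((3:ℝ)^w₁)⁻¹ * (Y^w₂)⁻¹)
        = ((1:ℝ)/3) ^ w₁ * ((1:ℝ)/Y) ^ w₂ + ((2:ℝ)/3) ^ w₁ * ((2*B)/Y) ^ w₂ := by
          rw [e1, e2, e4]; ring
      _ ≤ w₁ * (1/3) + w₂ * (1/Y) + (w₁ * (2/3) + w₂ * ((2*B)/Y)) :=
          add_le_add t₁ t₂
      _ = 1 := hrsum
  have hfin : 1 + 2 * (4:ℝ)^s ≤ (3:ℝ)^w₁ * Y^w₂ := by
    have h := mul_le_mul_of_nonneg_right key hmulpos.le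
    rw [one_mul] at h
    calc 1 + 2 * (4:ℝ)^s
        = (1 + 2 * (4:ℝ)^s) * (((3:ℝ)^w₁)⁻¹ * (Y^w₂)⁻¹) * ((3:ℝ)^w₁ * Y^w₂) := by
          field_simp
      _ ≤ (3:ℝ)^w₁ * Y^w₂ := h
  simpa [hw1, hw2] using hfin

lemma key2 : Real.log (1 + 2*(4:ℝ)^(0.7:ℝ)) ≤
    1.7 * Real.log 3 - (7/60) * (3:ℝ)^(-(10/7):ℝ) := by
  set B : ℝ := (4:ℝ) ^ (0.7:ℝ) with hB
  have hBpos : 0 < B := rpow_pos_of_pos (by norm_num) _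
  set Y : ℝ := 1 + 2 * B with hY
  have hYpos : 0 < Y := by positivity
  have hY' : Y ≤ 6.28 := by have := num2; rw [hY]; linarith
  set u : ℝ := (3:ℝ) ^ (1.7:ℝ) with hu
  have hupos : 0 < u := rpow_pos_of_pos (by norm_num) _
  have hu' : (6.47:ℝ) ≤ u := num1
  have hlogu : Real.log u = 1.7 * Real.log 3 := by
    rw [hu, log_rpow (by norm_num)]
  have hdiv : Real.log u - Real.log Y = Real.log (u / Y) :=
    (log_div hupos.ne' hYpos.ne').symm
  have hlb : 1 - (u / Y)⁻¹ ≤ Real.log (u / Y) :=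
    one_sub_inv_le_log_of_pos (by positivity)
  have hinv : (u / Y)⁻¹ = Y / u := by field_simp
  have hYu : Y / u ≤ 6.28 / 6.47 :=
    div_le_div₀ (by norm_num) hY' (by norm_num) hu'
  have hnum : (7/60 : ℝ) * (3:ℝ)^(-(10/7):ℝ) ≤ 1 - 6.28/6.47 := by
    have := num3
    nlinarith
  have hmain : (7/60 : ℝ) * (3:ℝ)^(-(10/7):ℝ) ≤ Real.log u - Real.log Y := by
    rw [hdiv]
    calc (7/60 : ℝ) * (3:ℝ)^(-(10/7):ℝ) ≤ 1 - 6.28/6.47 := hnum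
      _ ≤ 1 - Y/u := by linarith
      _ = 1 - (u/Y)⁻¹ := by rw [hinv]
      _ ≤ Real.log (u / Y) := hlb
  linarith [hlogu ▸ hmain]

lemma keyA (s : ℝ) (hs0 : 0 ≤ s) (hs7 : s ≤ 0.7) :
    Real.log (1 + 2 * (4:ℝ) ^ s) ≤
      (1 + s) * Real.log 3 - (s/6) * (3:ℝ)^(-(10/7):ℝ) := by
  have hBpos : (0:ℝ) < (4:ℝ) ^ (0.7:ℝ) := rpow_pos_of_pos (by norm_num) _
  have hYpos : (0:ℝ) < 1 + 2 * (4:ℝ) ^ (0.7:ℝ) := by positivity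
  have h1 : Real.log (1 + 2 * (4:ℝ) ^ s) ≤
      (1 - s/0.7) * Real.log 3 + (s/0.7) * Real.log (1 + 2 * (4:ℝ) ^ (0.7:ℝ)) := by
    calc Real.log (1 + 2 * (4:ℝ) ^ s)
        ≤ Real.log ((3:ℝ) ^ (1 - s/0.7 : ℝ) * (1 + 2 * (4:ℝ) ^ (0.7:ℝ)) ^ (s/0.7 : ℝ)) := by
          apply Real.log_le_log (by positivity) (holder s hs0 hs7)
      _ = (1 - s/0.7) * Real.log 3 + (s/0.7) * Real.log (1 + 2 * (4:ℝ) ^ (0.7:ℝ)) := by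
          rw [Real.log_mul (by positivity) (by positivity),
            log_rpow (by norm_num), log_rpow hYpos]
  have hlam : (0:ℝ) ≤ s/0.7 := by positivity
  have h2 := mul_le_mul_of_nonneg_left key2 hlam
  calc Real.log (1 + 2 * (4:ℝ) ^ s)
      ≤ (1 - s/0.7) * Real.log 3
          + (s/0.7) * (1.7 * Real.log 3 - (7/60) * (3:ℝ)^(-(10/7):ℝ)) := by linarith
    _ = (1 + s) * Real.log 3 - (s/6) * (3:ℝ)^(-(10/7):ℝ) := by ring

lemma log18 : Real.log 18 = Real.log 2 + 2 * Real.log 3 := by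
  rw [show (18:ℝ) = 2 * 3 ^ (2:ℕ) by norm_num,
    Real.log_mul (by norm_num) (by norm_num), Real.log_pow]
  push_cast; ring

lemma fdecomp (p : ℝ) (hp : 1 < p) :
    f p = Real.log (2 + (4:ℝ)^p) + p * Real.log 3
      + (p-1) * Real.log (2 + (3:ℝ)^(-(p/(p-1)))) := by
  have hs : (0:ℝ) < p - 1 := by linarith
  set q : ℝ := p / (p - 1) with hq
  have h3q : (0:ℝ) < (3:ℝ) ^ q := rpow_pos_of_pos (by norm_num) _
  have h3q' : (0:ℝ) < (3:ℝ) ^ (-q) := rpow_pos_of_pos (by norm_num) _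
  have hmul : 2 * (3:ℝ) ^ q + 1 = (3:ℝ) ^ q * (2 + (3:ℝ) ^ (-q)) := by
    rw [rpow_neg (by norm_num : (0:ℝ) ≤ 3)]
    field_simp
  have hlog : Real.log (2 * (3:ℝ) ^ q + 1)
      = q * Real.log 3 + Real.log (2 + (3:ℝ) ^ (-q)) := by
    rw [hmul, Real.log_mul h3q.ne' (by positivity), log_rpow (by norm_num)]
  have hpq : (p - 1) * q = p := by rw [hq]; field_simp
  unfold f
  rw [hlog]
  rw [mul_add, ← mul_assoc, hpq]
  ring

lemma f_le (p : ℝ) (hp1 : 1 < p) (hp17 : p ≤ 1.7) : f p ≤ p * Real.log 18 := by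
  set s : ℝ := p - 1 with hsdef
  have hs0 : 0 < s := by simp [hsdef]; linarith
  have hs7 : s ≤ 0.7 := by rw [hsdef]; norm_num; linarith
  set q : ℝ := p / (p - 1) with hq
  have h3q' : (0:ℝ) < (3:ℝ) ^ (-q) := rpow_pos_of_pos (by norm_num) _
  -- decomposition
  have hdec := fdecomp p hp1
  -- rewrite log (2 + 4^p)
  have h4p : (2:ℝ) + (4:ℝ)^p = 2 * (1 + 2 * (4:ℝ)^s) := by
    have : (4:ℝ)^p = 4 * (4:ℝ)^s := by
      rw [show p = 1 + s by rw [hsdef]; ring, rpow_add (by norm_num : (0:ℝ) < 4), rpow_one]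
    rw [this]; ring
  have h4s : (0:ℝ) < 1 + 2 * (4:ℝ)^s := by positivity
  have hlog4 : Real.log (2 + (4:ℝ)^p) = Real.log 2 + Real.log (1 + 2 * (4:ℝ)^s) := by
    rw [h4p, Real.log_mul (by norm_num) h4s.ne']
  -- rewrite log (2 + 3^{-q})
  have h2t : (2:ℝ) + (3:ℝ)^(-q) = 2 * (1 + (3:ℝ)^(-q)/2) := by ring
  have hlog2t : Real.log (2 + (3:ℝ)^(-q))
      = Real.log 2 + Real.log (1 + (3:ℝ)^(-q)/2) := by
    rw [h2t, Real.log_mul (by norm_num) (by positivity)]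
  -- bound log(1 + t/2) ≤ t/2
  have hb1 : Real.log (1 + (3:ℝ)^(-q)/2) ≤ (3:ℝ)^(-q)/2 := by
    have := Real.log_le_sub_one_of_pos (show (0:ℝ) < 1 + (3:ℝ)^(-q)/2 by positivity)
    linarith
  -- 3^{-q} = (1/3) * 3^{-(1/s)}
  have hs0' : p - 1 ≠ 0 := by
    intro h; rw [hsdef] at hs0; linarith [hs0, h.symm.le]
  have hqs : -q = (-1) + (-(1/s)) := by
    rw [hq, hsdef]
    field_simp
    ring
  have h3qsplit : (3:ℝ)^(-q) = (3:ℝ)^(-1:ℝ) * (3:ℝ)^(-(1/s)) := by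
    rw [hqs, rpow_add (by norm_num : (0:ℝ) < 3)]
  have h31 : (3:ℝ)^(-1:ℝ) = 1/3 := by
    rw [rpow_neg_one]; norm_num
  -- 3^{-1/s} ≤ 3^{-10/7}
  have hexp : -(1/s) ≤ -(10/7 : ℝ) := by
    have : (10:ℝ)/7 ≤ 1/s := by
      rw [div_le_div_iff₀ (by norm_num) hs0]
      linarith
    linarith
  have hb3 : (3:ℝ)^(-(1/s)) ≤ (3:ℝ)^(-(10/7):ℝ) :=
    rpow_le_rpow_of_exponent_le (by norm_num) hexp
  -- assemble
  have hA := keyA s hs0.le hs7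
  set C : ℝ := (3:ℝ)^(-(10/7):ℝ) with hC
  have hCpos : 0 < C := rpow_pos_of_pos (by norm_num) _
  have hterm : (p - 1) * Real.log (2 + (3:ℝ)^(-q))
      ≤ s * Real.log 2 + (s/6) * C := by
    rw [hlog2t, ← hsdef]
    have h1 : s * Real.log (1 + (3:ℝ)^(-q)/2) ≤ s * ((3:ℝ)^(-q)/2) :=
      mul_le_mul_of_nonneg_left hb1 hs0.le
    have h2 : s * ((3:ℝ)^(-q)/2) ≤ (s/6) * C := by
      rw [h3qsplit, h31]
      have := mul_le_mul_of_nonneg_left hb3 (show (0:ℝ) ≤ s/6 by positivity)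
      calc s * ((1/3) * (3:ℝ)^(-(1/s)) / 2) = (s/6) * (3:ℝ)^(-(1/s)) := by ring
        _ ≤ (s/6) * C := this
    nlinarith [h1, h2]
  calc f p = Real.log 2 + Real.log (1 + 2 * (4:ℝ)^s) + p * Real.log 3
        + (p-1) * Real.log (2 + (3:ℝ)^(-q)) := by rw [hdec, hlog4]
    _ ≤ Real.log 2 + ((1 + s) * Real.log 3 - (s/6) * C) + p * Real.log 3
        + (s * Real.log 2 + (s/6) * C) := by
        linarith [hterm, hA]
    _ = (1 + s) * (Real.log 2 + 2 * Real.log 3) := by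
        have : p = 1 + s := by rw [hsdef]; ring
        rw [this]; ring
    _ = p * Real.log 18 := by rw [log18, hsdef]; ring

end RLog18Aux

open RLog18Aux in
/-- `r(p) ≤ lim_{p→1⁺} r(p) = ln 18` for all `p ∈ (1, 1.7]`. -/
theorem r_le_log_eighteen :
    Tendsto r (𝓝[>] (1 : ℝ)) (𝓝 (Real.log 18)) ∧
    ∀ p : ℝ, 1 < p → p ≤ 1.7 → r p ≤ Real.log 18 := by
  constructor
  · -- the limit
    have T1 : Tendsto (fun p : ℝ => Real.log (2 + (4:ℝ)^p)) (𝓝[>] (1:ℝ))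
        (𝓝 (Real.log 6)) := by
      have c1 : ContinuousAt (fun p : ℝ => Real.log (2 + (4:ℝ)^p)) 1 := by
        apply Real.continuousAt_log (by
          rw [Real.rpow_one]; norm_num)
          |>.comp
        exact continuousAt_const.add (Real.continuousAt_const_rpow (by norm_num))
      have h2 : Tendsto (fun p : ℝ => Real.log (2 + (4:ℝ)^p)) (𝓝[>] (1:ℝ))
          (𝓝 (Real.log (2 + (4:ℝ)^(1:ℝ)))) := c1.tendsto.mono_left nhdsWithin_le_nhds
      simpa [Real.rpow_one, show (2:ℝ)+4 = 6 by norm_num] using h2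
    have T2 : Tendsto (fun p : ℝ => p * Real.log 3) (𝓝[>] (1:ℝ)) (𝓝 (Real.log 3)) := by
      have : ContinuousAt (fun p : ℝ => p * Real.log 3) 1 :=
        continuousAt_id.mul continuousAt_const
      simpa using this.tendsto.mono_left nhdsWithin_le_nhds
    have TA : Tendsto (fun p : ℝ => p - 1) (𝓝[>] (1:ℝ)) (𝓝[>] (0:ℝ)) := by
      apply tendsto_nhdsWithin_of_tendsto_nhds_of_eventually_within
      · have : ContinuousAt (fun p : ℝ => p - 1) 1 := continuousAt_id.sub continuousAt_const
        simpa using this.tendsto.mono_left nhdsWithin_le_nhds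
      · filter_upwards [self_mem_nhdsWithin] with p hp
        exact sub_pos.mpr (Set.mem_Ioi.mp hp)
    have TB : Tendsto (fun p : ℝ => (p - 1)⁻¹) (𝓝[>] (1:ℝ)) atTop :=
      tendsto_inv_nhdsGT_zero.comp TA
    have Tid : Tendsto (fun p : ℝ => p) (𝓝[>] (1:ℝ)) (𝓝 1) :=
      continuousAt_id.tendsto.mono_left nhdsWithin_le_nhds
    have TC : Tendsto (fun p : ℝ => p / (p - 1)) (𝓝[>] (1:ℝ)) atTop := by
      have := Tendsto.pos_mul_atTop one_pos Tid TB
      simpa [div_eq_mul_inv] using this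
    have T4 : Tendsto (fun p : ℝ => (3:ℝ)^(-(p/(p-1)))) (𝓝[>] (1:ℝ)) (𝓝 0) := by
      have hbase : ∀ x : ℝ, (3:ℝ)^x = Real.exp (Real.log 3 * x) := fun x =>
        Real.rpow_def_of_pos (by norm_num) x
      have hneg : Tendsto (fun p : ℝ => -(p/(p-1))) (𝓝[>] (1:ℝ)) atBot :=
        tendsto_neg_atTop_atBot.comp TC
      have hmul : Tendsto (fun p : ℝ => Real.log 3 * -(p/(p-1))) (𝓝[>] (1:ℝ)) atBot :=
        hneg.const_mul_atBot (by positivity : (0:ℝ) < Real.log 3)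
      have := Real.tendsto_exp_atBot.comp hmul
      refine Tendsto.congr (fun p => ?_) this
      rw [hbase]
      rfl
    have T5 : Tendsto (fun p : ℝ => Real.log (2 + (3:ℝ)^(-(p/(p-1))))) (𝓝[>] (1:ℝ))
        (𝓝 (Real.log 2)) := by
      have h2 : Tendsto (fun p : ℝ => 2 + (3:ℝ)^(-(p/(p-1)))) (𝓝[>] (1:ℝ)) (𝓝 2) := by
        have := tendsto_const_nhds (x := (2:ℝ)) (f := 𝓝[>] (1:ℝ)) |>.add T4
        simpa using this
      have hc : ContinuousAt Real.log 2 := Real.continuousAt_log (by norm_num)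
      exact hc.tendsto.comp h2
    have T6 : Tendsto (fun p : ℝ => p - 1) (𝓝[>] (1:ℝ)) (𝓝 0) := by
      have : ContinuousAt (fun p : ℝ => p - 1) 1 := continuousAt_id.sub continuousAt_const
      simpa using this.tendsto.mono_left nhdsWithin_le_nhds
    have T3 : Tendsto (fun p : ℝ => (p-1) * Real.log (2 + (3:ℝ)^(-(p/(p-1)))))
        (𝓝[>] (1:ℝ)) (𝓝 0) := by
      have := T6.mul T5
      simpa using this
    have heq : (fun p : ℝ => Real.log (2 + (4:ℝ)^p) + p * Real.log 3
        + (p-1) * Real.log (2 + (3:ℝ)^(-(p/(p-1))))) =ᶠ[𝓝[>] (1:ℝ)] f := by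
      filter_upwards [self_mem_nhdsWithin] with p hp
      exact (fdecomp p hp).symm
    have Tf : Tendsto f (𝓝[>] (1:ℝ)) (𝓝 (Real.log 18)) := by
      have hsum : Real.log 6 + Real.log 3 + 0 = Real.log 18 := by
        rw [add_zero, ← Real.log_mul (by norm_num) (by norm_num)]
        norm_num
      rw [← hsum]
      exact Tendsto.congr' heq ((T1.add T2).add T3)
    have Tr := Tf.div Tid one_ne_zero
    rw [div_one] at Tr
    exact Tr
  · intro p hp1 hp17
    have hppos : (0:ℝ) < p := by linarith
    have := f_le p hp1 hp17
    rw [r, div_le_iff₀ hppos]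
    linarith [this]
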